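/- Let d be a positive definite diagonal real n×n matrix and b a positive semidefinite real symmetric n×n matrix. Then the matrix A₁ := [d^{1/2}(d+2b)d^{1/2}]^{−1/4} · d · [d^{1/2}(d+2b)d^{1/2}]^{−1/4} satisfies A₁ ≤ I, and A₂ := [(d+2b)^{1/2} d (d+2b)^{1/2}]^{−1/4} · (d+2b) · [(d+2b)^{1/2} d (d+2b)^{1/2}]^{−1/4} satisfies A₂ ≥ I. -/

import Mathlib

open Matrix

namespace Matrix.PosSemidef

/-- The square root of a positive semidefinite matrix, as defined in the older Mathlib
(removed since then in favour of `CFC.sqrt`). -/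
noncomputable def sqrt {n : Type*} [Fintype n] [DecidableEq n]
    {A : Matrix n n ℝ} (hA : A.PosSemidef) : Matrix n n ℝ :=
  hA.1.eigenvectorUnitary.1 * diagonal ((√·) ∘ hA.1.eigenvalues) *
    (star hA.1.eigenvectorUnitary : Matrix n n ℝ)

theorem posSemidef_sqrt {n : Type*} [Fintype n] [DecidableEq n]
    {A : Matrix n n ℝ} (hA : A.PosSemidef) : PosSemidef hA.sqrt := by
  unfold sqrt
  have h : (diagonal ((√·) ∘ hA.1.eigenvalues) : Matrix n n ℝ).PosSemidef := by
    rw [posSemidef_diagonal_iff]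
    intro i
    simp [Real.sqrt_nonneg]
  exact h.mul_mul_conjTranspose_same (hA.1.eigenvectorUnitary : Matrix n n ℝ)

end Matrix.PosSemidef

namespace Matrix.PosSemidef

theorem sqrt_eq_cfc_aux {n : Type*} [Fintype n] [DecidableEq n]
    {A : Matrix n n ℝ} (hA : A.PosSemidef) : hA.sqrt = cfc Real.sqrt A := by
  rw [hA.1.cfc_eq]
  rfl

theorem spectrum_nonneg_aux {n : Type*} [Fintype n] [DecidableEq n]
    {A : Matrix n n ℝ} (hA : A.PosSemidef) {x : ℝ} (hx : x ∈ spectrum ℝ A) : 0 ≤ x := by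
  rw [hA.1.spectrum_real_eq_range_eigenvalues] at hx
  obtain ⟨i, rfl⟩ := hx
  exact hA.eigenvalues_nonneg i

theorem sqrt_mul_self {n : Type*} [Fintype n] [DecidableEq n]
    {A : Matrix n n ℝ} (hA : A.PosSemidef) : hA.sqrt * hA.sqrt = A := by
  rw [sqrt_eq_cfc_aux, ← cfc_mul Real.sqrt Real.sqrt A]
  conv_rhs => rw [← cfc_id ℝ A hA.1.isSelfAdjoint]
  apply cfc_congr
  intro x hx
  exact Real.mul_self_sqrt (hA.spectrum_nonneg_aux hx)

theorem sqrt_sq {n : Type*} [Fintype n] [DecidableEq n]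
    {A : Matrix n n ℝ} (hA : A.PosSemidef) : (hA.pow 2 : PosSemidef (A ^ 2)).sqrt = A := by
  rw [sqrt_eq_cfc_aux, ← cfc_comp_pow Real.sqrt 2 A (ha := hA.1.isSelfAdjoint)]
  conv_rhs => rw [← cfc_id ℝ A hA.1.isSelfAdjoint]
  apply cfc_congr
  intro x hx
  exact Real.sqrt_sq (hA.spectrum_nonneg_aux hx)

end Matrix.PosSemidef

theorem Matrix.IsHermitian.posSemidef_of_eigenvalues_nonneg {n : Type*} [Fintype n]
    [DecidableEq n] {A : Matrix n n ℝ} (hA : A.IsHermitian) (h : ∀ i, 0 ≤ hA.eigenvalues i) :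
    A.PosSemidef :=
  hA.posSemidef_iff_eigenvalues_nonneg.mpr h

section Aux

variable {n : ℕ}

private lemma conj_posDef {A C : Matrix (Fin n) (Fin n) ℝ} (hA : A.PosDef) (hC : C.PosDef) :
    (C * A * C).PosDef := by
  have hpsd := hA.posSemidef.mul_mul_conjTranspose_same C
  rw [hC.isHermitian.eq] at hpsd
  refine PosDef.of_dotProduct_mulVec_pos hpsd.1 (fun x hx => ?_)
  have hx' : C *ᵥ x ≠ 0 := by
    intro hcx
    exact hx <| (Matrix.mulVec_injective_iff_isUnit.mpr hC.isUnit) (by simpa using hcx)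
  have hCC : C * A * C = Cᴴ * A * C := by rw [hC.isHermitian.eq]
  rw [hCC]
  simpa only [star_mulVec, dotProduct_mulVec, vecMul_vecMul] using hA.dotProduct_mulVec_pos hx'

private lemma sqrt_posDef {A : Matrix (Fin n) (Fin n) ℝ} (hA : A.PosDef) :
    (hA.posSemidef.sqrt).PosDef := by
  have hSpsd := hA.posSemidef.posSemidef_sqrt
  refine PosDef.of_dotProduct_mulVec_pos hSpsd.1 (fun x hx => ?_)
  rcases (hSpsd.dotProduct_mulVec_nonneg x).lt_or_eq with h | h
  · exact h
  · exfalso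
    have hz : hA.posSemidef.sqrt *ᵥ x = 0 := (hSpsd.dotProduct_mulVec_zero_iff x).mp h.symm
    have hAz : A *ᵥ x = 0 := by
      rw [← hA.posSemidef.sqrt_mul_self, ← mulVec_mulVec, hz, mulVec_zero]
    have := hA.dotProduct_mulVec_pos hx
    rw [hAz, dotProduct_zero] at this
    exact lt_irrefl 0 this

private lemma sqrt_mono {A B : Matrix (Fin n) (Fin n) ℝ} (hA : A.PosSemidef) (hB : B.PosSemidef)
    (hAB : (B - A).PosSemidef) (hsum : (hA.sqrt + hB.sqrt).PosDef) :
    (hB.sqrt - hA.sqrt).PosSemidef := by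
  have hP := hA.posSemidef_sqrt
  have hQ := hB.posSemidef_sqrt
  have hT : (hB.sqrt - hA.sqrt).IsHermitian := hQ.1.sub hP.1
  apply hT.posSemidef_of_eigenvalues_nonneg
  intro i
  set μ := hT.eigenvalues i with hμ
  set v : Fin n → ℝ := ⇑(hT.eigenvectorBasis i) with hv
  have hev : (hB.sqrt - hA.sqrt) *ᵥ v = μ • v := hT.mulVec_eigenvectorBasis i
  have hvne : v ≠ 0 := by
    have h0 := hT.eigenvectorBasis.orthonormal.ne_zero i
    intro h
    exact h0 (by ext j; exact congrFun h j)
  have key : 0 ≤ v ⬝ᵥ ((B - A) *ᵥ v) := by simpa using hAB.dotProduct_mulVec_nonneg v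
  have decomp : B - A = hB.sqrt * (hB.sqrt - hA.sqrt) + (hB.sqrt - hA.sqrt) * hA.sqrt := by
    rw [mul_sub, sub_mul, hA.sqrt_mul_self, hB.sqrt_mul_self]
    abel
  have e1 : v ⬝ᵥ ((hB.sqrt * (hB.sqrt - hA.sqrt)) *ᵥ v) = μ * (v ⬝ᵥ (hB.sqrt *ᵥ v)) := by
    rw [← mulVec_mulVec, hev, mulVec_smul, dotProduct_smul, smul_eq_mul]
  have e2 : v ⬝ᵥ (((hB.sqrt - hA.sqrt) * hA.sqrt) *ᵥ v) = μ * (v ⬝ᵥ (hA.sqrt *ᵥ v)) := by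
    rw [← mulVec_mulVec, dotProduct_mulVec, ← mulVec_transpose]
    have hTt : (hB.sqrt - hA.sqrt)ᵀ = hB.sqrt - hA.sqrt := by
      have := hT.eq; rwa [conjTranspose] at this
    rw [hTt, hev]
    rw [smul_dotProduct, smul_eq_mul]
  have key' : 0 ≤ μ * (v ⬝ᵥ ((hA.sqrt + hB.sqrt) *ᵥ v)) := by
    rw [decomp] at key
    rw [add_mulVec, dotProduct_add] at key ⊢
    rw [e1, e2] at key
    have expand : μ * (v ⬝ᵥ (hA.sqrt *ᵥ v) + v ⬝ᵥ (hB.sqrt *ᵥ v))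
        = μ * (v ⬝ᵥ (hA.sqrt *ᵥ v)) + μ * (v ⬝ᵥ (hB.sqrt *ᵥ v)) := by ring
    rw [expand]
    linarith
  have hpos : 0 < v ⬝ᵥ ((hA.sqrt + hB.sqrt) *ᵥ v) := by simpa using hsum.dotProduct_mulVec_pos hvne
  nlinarith

end Aux

set_option maxHeartbeats 2000000 in
/-- Let `d` be positive definite diagonal and `b ≥ 0` symmetric. Then
`A₁ := [d^{1/2}(d+2b)d^{1/2}]^{−1/4} d [d^{1/2}(d+2b)d^{1/2}]^{−1/4} ≤ I` and
`A₂ := [(d+2b)^{1/2}d(d+2b)^{1/2}]^{−1/4} (d+2b) [(d+2b)^{1/2}d(d+2b)^{1/2}]^{−1/4} ≥ I`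
in the Loewner order. -/
theorem loewner_bounds_A1_A2 {n : ℕ} (d b : Matrix (Fin n) (Fin n) ℝ)
    (hd : d.PosDef) (hdiag : d.IsDiag) (hb : b.PosSemidef)
    (hdb : (d + 2 • b).PosSemidef)
    (h1 : (hd.posSemidef.sqrt * (d + 2 • b) * hd.posSemidef.sqrt).PosSemidef)
    (h2 : (hdb.sqrt * d * hdb.sqrt).PosSemidef) :
    ((1 : Matrix (Fin n) (Fin n) ℝ)
        - (h1.posSemidef_sqrt.sqrt)⁻¹ * d * (h1.posSemidef_sqrt.sqrt)⁻¹).PosSemidef ∧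
    ((h2.posSemidef_sqrt.sqrt)⁻¹ * (d + 2 • b) * (h2.posSemidef_sqrt.sqrt)⁻¹
        - (1 : Matrix (Fin n) (Fin n) ℝ)).PosSemidef := by
  have hb2 : (2 • b : Matrix (Fin n) (Fin n) ℝ).PosSemidef := by
    rw [two_smul]; exact hb.add hb
  have hdb' : (d + 2 • b).PosDef := hd.add_posSemidef hb2
  constructor
  · -- Part 1
    have hs : (hd.posSemidef.sqrt).PosDef := sqrt_posDef hd
    have hss : hd.posSemidef.sqrt * hd.posSemidef.sqrt = d := hd.posSemidef.sqrt_mul_self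
    have hM1 : (hd.posSemidef.sqrt * (d + 2 • b) * hd.posSemidef.sqrt).PosDef :=
      conj_posDef hdb' hs
    have hd2 : (d ^ 2).PosSemidef := hd.posSemidef.pow 2
    have hdiff : (hd.posSemidef.sqrt * (d + 2 • b) * hd.posSemidef.sqrt - d ^ 2).PosSemidef := by
      have h3 : hd.posSemidef.sqrt * d * hd.posSemidef.sqrt = d * d := by
        calc hd.posSemidef.sqrt * d * hd.posSemidef.sqrt
            = hd.posSemidef.sqrt * (hd.posSemidef.sqrt * hd.posSemidef.sqrt)
              * hd.posSemidef.sqrt := by rw [hss]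
          _ = (hd.posSemidef.sqrt * hd.posSemidef.sqrt)
              * (hd.posSemidef.sqrt * hd.posSemidef.sqrt) := by noncomm_ring
          _ = d * d := by rw [hss]
      have heq : hd.posSemidef.sqrt * (d + 2 • b) * hd.posSemidef.sqrt - d ^ 2
          = hd.posSemidef.sqrt * (2 • b) * hd.posSemidef.sqrt := by
        rw [mul_add, add_mul, pow_two, h3]
        abel
      rw [heq]
      have := hb2.mul_mul_conjTranspose_same hd.posSemidef.sqrt
      rwa [hs.isHermitian.eq] at this
    have hsum : (hd2.sqrt + h1.sqrt).PosDef := by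
      rw [hd.posSemidef.sqrt_sq]
      exact hd.add_posSemidef h1.posSemidef_sqrt
    have hmono := sqrt_mono hd2 h1 hdiff hsum
    rw [hd.posSemidef.sqrt_sq] at hmono
    -- conjugate by Q⁻¹ where Q is the fourth root
    have hQ1 : (h1.sqrt).PosDef := sqrt_posDef hM1
    have hQ : (h1.posSemidef_sqrt.sqrt).PosDef := sqrt_posDef hQ1
    set Q := h1.posSemidef_sqrt.sqrt with hQdef
    have hdet : IsUnit Q.det := hQ.det_pos.ne'.isUnit
    have hQQ : Q * Q = h1.sqrt := h1.posSemidef_sqrt.sqrt_mul_self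
    have hid : Q⁻¹ * h1.sqrt * Q⁻¹ = 1 := by
      rw [← hQQ, ← mul_assoc, nonsing_inv_mul _ hdet, one_mul, mul_nonsing_inv _ hdet]
    have hconj := hmono.mul_mul_conjTranspose_same Q⁻¹
    rw [hQ.isHermitian.inv.eq] at hconj
    have : Q⁻¹ * (h1.sqrt - d) * Q⁻¹ = 1 - Q⁻¹ * d * Q⁻¹ := by
      rw [mul_sub, sub_mul, hid]
    rwa [this] at hconj
  · -- Part 2
    have ht : (hdb.sqrt).PosDef := sqrt_posDef hdb'
    have htt : hdb.sqrt * hdb.sqrt = d + 2 • b := hdb.sqrt_mul_self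
    have hM2 : (hdb.sqrt * d * hdb.sqrt).PosDef := conj_posDef hd ht
    have hB2 : ((d + 2 • b) ^ 2).PosSemidef := hdb.pow 2
    have hdiff : ((d + 2 • b) ^ 2 - hdb.sqrt * d * hdb.sqrt).PosSemidef := by
      have heq : (d + 2 • b) ^ 2 - hdb.sqrt * d * hdb.sqrt
          = hdb.sqrt * (2 • b) * hdb.sqrt := by
        have h3 : hdb.sqrt * (d + 2 • b) * hdb.sqrt = (d + 2 • b) * (d + 2 • b) := by
          calc hdb.sqrt * (d + 2 • b) * hdb.sqrt
              = hdb.sqrt * (hdb.sqrt * hdb.sqrt) * hdb.sqrt := by rw [htt]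
            _ = (hdb.sqrt * hdb.sqrt) * (hdb.sqrt * hdb.sqrt) := by noncomm_ring
            _ = (d + 2 • b) * (d + 2 • b) := by rw [htt]
        calc (d + 2 • b) ^ 2 - hdb.sqrt * d * hdb.sqrt
            = hdb.sqrt * (d + 2 • b) * hdb.sqrt - hdb.sqrt * d * hdb.sqrt := by
              rw [pow_two, ← h3]
          _ = hdb.sqrt * (2 • b) * hdb.sqrt := by rw [mul_add, add_mul]; abel
      rw [heq]
      have := hb2.mul_mul_conjTranspose_same hdb.sqrt
      rwa [ht.isHermitian.eq] at this
    have hsum : (h2.sqrt + hB2.sqrt).PosDef := by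
      rw [hdb.sqrt_sq]
      exact Matrix.PosDef.posSemidef_add h2.posSemidef_sqrt hdb'
    have hmono := sqrt_mono h2 hB2 hdiff hsum
    rw [hdb.sqrt_sq] at hmono
    have hQ2 : (h2.sqrt).PosDef := sqrt_posDef hM2
    have hQ : (h2.posSemidef_sqrt.sqrt).PosDef := sqrt_posDef hQ2
    set Q := h2.posSemidef_sqrt.sqrt with hQdef
    have hdet : IsUnit Q.det := hQ.det_pos.ne'.isUnit
    have hQQ : Q * Q = h2.sqrt := h2.posSemidef_sqrt.sqrt_mul_self
    have hid : Q⁻¹ * h2.sqrt * Q⁻¹ = 1 := by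
      rw [← hQQ, ← mul_assoc, nonsing_inv_mul _ hdet, one_mul, mul_nonsing_inv _ hdet]
    have hconj := hmono.mul_mul_conjTranspose_same Q⁻¹
    rw [hQ.isHermitian.inv.eq] at hconj
    have : Q⁻¹ * (d + 2 • b - h2.sqrt) * Q⁻¹ = Q⁻¹ * (d + 2 • b) * Q⁻¹ - 1 := by
      rw [mul_sub, sub_mul, hid]
    rwa [this] at hconj
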